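/- Let m ≥ n ≥ 1 and suppose m/n is not an integer prime power (including m ≠ n). Then the matrix Φ_m(C_{Φ_n}) is unimodular over ℤ, i.e., its determinant is ±1. -/

import Mathlib

open Polynomial Matrix

def companion {R : Type*} [CommRing R] (g : R[X]) :
    Matrix (Fin g.natDegree) (Fin g.natDegree) R :=
  Matrix.of fun i j =>
    if (i : ℕ) = 0 then -g.coeff (g.natDegree - 1 - (j : ℕ))
    else if (i : ℕ) = (j : ℕ) + 1 then 1 else 0

/-- `aeval` commutes with matrix transpose. -/
lemma aeval_transpose {R n : Type*} [CommRing R] [Fintype n] [DecidableEq n]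
    (M : Matrix n n R) (p : R[X]) : aeval Mᵀ p = (aeval M p)ᵀ := by
  induction p using Polynomial.induction_on' with
  | add f g hf hg => simp [hf, hg]
  | monomial k a =>
    simp only [aeval_monomial, transpose_mul, transpose_pow]
    rw [Algebra.algebraMap_eq_smul_one]
    simp [smul_mul_assoc, mul_smul_comm]

/-- `X ^ d %ₘ g = X ^ d - g` for `g` monic of degree `d > 0`. -/
lemma pow_natDegree_modByMonic (g : ℤ[X]) (hg : g.Monic) (hd : 0 < g.natDegree) :
    (X : ℤ[X]) ^ g.natDegree %ₘ g = X ^ g.natDegree - g := by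
  have h1 : (X : ℤ[X]) ^ g.natDegree = (X ^ g.natDegree - g) + 1 * g := by ring
  conv_lhs => rw [h1]
  rw [Polynomial.add_modByMonic, Polynomial.mul_self_modByMonic hg, add_zero]
  apply (Polynomial.modByMonic_eq_self_iff hg).mpr
  have hg0 : g ≠ 0 := hg.ne_zero
  have h2 : (X : ℤ[X]) ^ g.natDegree - g = -(g - X ^ g.natDegree) := by ring
  rw [h2, degree_neg]
  apply Polynomial.degree_sub_lt
  · rw [degree_X_pow, Polynomial.degree_eq_natDegree hg0]
  · exact hg0
  · rw [hg.leadingCoeff, leadingCoeff_X_pow]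

lemma companion_eq (g : ℤ[X]) (hg : g.Monic) :
    companion g = ((Algebra.leftMulMatrix
        ((AdjoinRoot.powerBasisAux' hg).reindex
          (Fin.revPerm : Equiv.Perm (Fin g.natDegree))))
      (AdjoinRoot.root g))ᵀ := by
  ext i j
  have hd : 0 < g.natDegree := i.pos
  have hi : (i : ℕ) < g.natDegree := i.isLt
  have hj : (j : ℕ) < g.natDegree := j.isLt
  rw [transpose_apply, Algebra.leftMulMatrix_eq_repr_mul, Module.Basis.repr_reindex_apply,
    Module.Basis.reindex_apply]
  have hrev : ∀ k : Fin g.natDegree,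
      (Fin.revPerm : Equiv.Perm (Fin g.natDegree)).symm k = k.rev := fun _ => rfl
  rw [hrev, hrev]
  have hbasis : ∀ k : Fin g.natDegree,
      AdjoinRoot.powerBasisAux' hg k = AdjoinRoot.root g ^ (k : ℕ) := fun k =>
    (AdjoinRoot.powerBasis' hg).basis_eq_pow k
  rw [hbasis, ← pow_succ', ← AdjoinRoot.mk_X (f := g), ← map_pow]
  have hrepr : ∀ (f : ℤ[X]) (k : Fin g.natDegree),
      (AdjoinRoot.powerBasisAux' hg).repr (AdjoinRoot.mk g f) k = (f %ₘ g).coeff (k : ℕ) := by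
    intro f k
    rw [AdjoinRoot.powerBasisAux'_repr_apply_to_fun, AdjoinRoot.modByMonicHom_mk]
  rw [hrepr]
  have hvi : ((Fin.rev i : Fin g.natDegree) : ℕ) = g.natDegree - ((i : ℕ) + 1) := Fin.val_rev i
  have hvj : ((Fin.rev j : Fin g.natDegree) : ℕ) = g.natDegree - ((j : ℕ) + 1) := Fin.val_rev j
  rw [hvi, hvj]
  rcases Nat.eq_zero_or_pos (i : ℕ) with h0 | hpos
  · have hexp : g.natDegree - ((i : ℕ) + 1) + 1 = g.natDegree := by omega
    rw [hexp, pow_natDegree_modByMonic g hg hd, coeff_sub, coeff_X_pow]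
    have hne : ¬ (g.natDegree - ((j : ℕ) + 1) = g.natDegree) := by omega
    rw [if_neg hne, zero_sub]
    simp only [companion, Matrix.of_apply, if_pos h0]
    rw [show g.natDegree - 1 - (j : ℕ) = g.natDegree - ((j : ℕ) + 1) by omega]
  · have hexp : g.natDegree - ((i : ℕ) + 1) + 1 = g.natDegree - (i : ℕ) := by omega
    rw [hexp, (Polynomial.modByMonic_eq_self_iff hg).mpr (by
      rw [degree_X_pow, Polynomial.degree_eq_natDegree hg.ne_zero]
      exact_mod_cast (by omega : g.natDegree - (i : ℕ) < g.natDegree)), coeff_X_pow]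
    simp only [companion, Matrix.of_apply, if_neg (by omega : ¬ (i : ℕ) = 0)]
    by_cases hij : (i : ℕ) = (j : ℕ) + 1
    · rw [if_pos hij, if_pos (by omega)]
    · rw [if_neg hij, if_neg (by omega)]

lemma aeval_companion_self (g : ℤ[X]) (hg : g.Monic) :
    aeval (companion g) g = 0 := by
  rw [companion_eq g hg, aeval_transpose,
    Polynomial.aeval_algHom_apply (Algebra.leftMulMatrix _) (AdjoinRoot.root g) g,
    AdjoinRoot.aeval_eq, AdjoinRoot.mk_self]
  simp

lemma cyclo_int_coprime (m n : ℕ) (hn : 1 ≤ n) (hmn : n ≤ m) (hne : m ≠ n)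
    (hnp : ¬ ∃ p k : ℕ, p.Prime ∧ 1 ≤ k ∧ m = n * p ^ k) :
    IsCoprime (cyclotomic m ℤ) (cyclotomic n ℤ) := by
  by_contra hcop
  have hI : Ideal.span {cyclotomic m ℤ, cyclotomic n ℤ} ≠ ⊤ := by
    intro h
    rw [Ideal.eq_top_iff_one, Ideal.mem_span_pair] at h
    obtain ⟨a, b, hab⟩ := h
    exact hcop ⟨a, b, hab⟩
  obtain ⟨M, hM, hle⟩ := Ideal.exists_le_maximal _ hI
  haveI := hM
  haveI := hM.isPrime
  have hmk : (aeval (Ideal.Quotient.mk M X) : ℤ[X] →ₐ[ℤ] (ℤ[X] ⧸ M))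
      = Ideal.Quotient.mkₐ ℤ M := Polynomial.algHom_ext (by simp)
  have key : ∀ l : ℕ, cyclotomic l ℤ ∈ M →
      IsRoot (cyclotomic l (ℤ[X] ⧸ M)) (Ideal.Quotient.mk M X) := by
    intro l hl
    have h0 : aeval (Ideal.Quotient.mk M X) (cyclotomic l ℤ) = 0 := by
      rw [hmk, Ideal.Quotient.mkₐ_eq_mk]
      exact Ideal.Quotient.eq_zero_iff_mem.mpr hl
    rw [aeval_def, ← eval_map, map_cyclotomic] at h0
    exact h0
  have hmmem : cyclotomic m ℤ ∈ M := hle (Ideal.subset_span (by simp))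
  have hnmem : cyclotomic n ℤ ∈ M := hle (Ideal.subset_span (by simp))
  have hrm := key m hmmem
  have hrn := key n hnmem
  haveI : CharP (ℤ[X] ⧸ M) (ringChar (ℤ[X] ⧸ M)) := ringChar.charP _
  rcases CharP.char_is_prime_or_zero (ℤ[X] ⧸ M) (ringChar (ℤ[X] ⧸ M)) with hp | h0
  · -- positive characteristic p
    set p := ringChar (ℤ[X] ⧸ M) with hpdef
    haveI : Fact p.Prime := ⟨hp⟩
    have hm0 : m ≠ 0 := by omega
    have hn0 : n ≠ 0 := by omega
    have hmfac : m = p ^ m.factorization p * (m / p ^ m.factorization p) :=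
      (Nat.ordProj_mul_ordCompl_eq_self m p).symm
    have hnfac : n = p ^ n.factorization p * (n / p ^ n.factorization p) :=
      (Nat.ordProj_mul_ordCompl_eq_self n p).symm
    have hpm : ¬ p ∣ (m / p ^ m.factorization p) := Nat.not_dvd_ordCompl hp hm0
    have hpn : ¬ p ∣ (n / p ^ n.factorization p) := Nat.not_dvd_ordCompl hp hn0
    haveI : NeZero ((m / p ^ m.factorization p : ℕ) : (ℤ[X] ⧸ M)) := NeZero.of_not_dvd _ hpm
    haveI : NeZero ((n / p ^ n.factorization p : ℕ) : (ℤ[X] ⧸ M)) := NeZero.of_not_dvd _ hpn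
    rw [hmfac] at hrm
    rw [hnfac] at hrn
    rw [isRoot_cyclotomic_prime_pow_mul_iff_of_charP] at hrm hrn
    have heq : m / p ^ m.factorization p = n / p ^ n.factorization p := hrm.unique hrn
    set a := m.factorization p
    set b := n.factorization p
    rw [← heq] at hnfac
    have hcpos : 0 < m / p ^ a := Nat.ordCompl_pos p hm0
    have hab : b < a := by
      by_contra hba
      push_neg at hba
      have : m ≤ n := by
        rw [hmfac, hnfac]
        exact Nat.mul_le_mul_right _ (Nat.pow_le_pow_right hp.pos hba)
      omega
    exact hnp ⟨p, a - b, hp, by omega, by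
      rw [hmfac, hnfac, mul_comm (p ^ b), mul_assoc, ← pow_add,
        (by omega : b + (a - b) = a), mul_comm]⟩
  · -- characteristic zero
    haveI : CharP (ℤ[X] ⧸ M) 0 := h0 ▸ (ringChar.charP _)
    haveI : CharZero (ℤ[X] ⧸ M) := CharP.charP_to_charZero _
    letI : Field (ℤ[X] ⧸ M) := Ideal.Quotient.field M
    obtain ⟨a, b, hab⟩ := cyclotomic.isCoprime_rat (show m ≠ n from hne)
    set y := Ideal.Quotient.mk M X
    have hq : ∀ l : ℕ, IsRoot (cyclotomic l (ℤ[X] ⧸ M)) y → aeval y (cyclotomic l ℚ) = 0 := by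
      intro l hl
      rw [aeval_def, ← eval_map, map_cyclotomic]
      exact hl
    have h1 := congrArg (aeval y : ℚ[X] →ₐ[ℚ] (ℤ[X] ⧸ M)) hab
    simp only [map_add, _root_.map_mul, _root_.map_one, hq m hrm, hq n hrn,
      mul_zero, add_zero, zero_add] at h1
    exact zero_ne_one h1

/-- If `m ≥ n ≥ 1`, `m ≠ n`, and `m/n` is not an integer prime power (i.e. `m` is not
of the form `n·p^k` with `p` prime and `k ≥ 1`), then `Φ_m(C_{Φ_n})` is unimodular
over `ℤ`: its determinant is a unit (`±1`). -/
theorem stmt18 (m n : ℕ) (hn : 1 ≤ n) (hmn : n ≤ m) (hne : m ≠ n)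
    (hnp : ¬ ∃ p k : ℕ, p.Prime ∧ 1 ≤ k ∧ m = n * p ^ k) :
    IsUnit (Polynomial.aeval (companion (Polynomial.cyclotomic n ℤ))
      (Polynomial.cyclotomic m ℤ)).det := by
  obtain ⟨a, b, hab⟩ := cyclo_int_coprime m n hn hmn hne hnp
  set C := companion (cyclotomic n ℤ)
  have h0 : aeval C (cyclotomic n ℤ) = 0 :=
    aeval_companion_self _ (cyclotomic.monic n ℤ)
  have h1 := congrArg (aeval C) hab
  simp only [map_add, _root_.map_mul, _root_.map_one, h0, mul_zero, add_zero] at h1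
  have h2 : aeval C (cyclotomic m ℤ) * aeval C a = 1 := by
    rw [← _root_.map_mul, mul_comm (cyclotomic m ℤ) a, _root_.map_mul, h1]
  exact (Matrix.isUnit_iff_isUnit_det _).mp ⟨⟨_, _, h2, h1⟩, rfl⟩
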